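/- Under the assumptions of strong convexity (constant σ) of f and compactness/convexity of U, the dual function q(λ) = min_{u ∈ U} { f(u) + ⟨Gᵀλ, u⟩ - ⟨λ, g⟩ } is differentiable with ∇q(λ) = G u(λ) - g, and its gradient is Lipschitz continuous with Lipschitz constant ‖G‖²/σ, i.e. ‖∇q(μ) - ∇q(λ)‖ ≤ (‖G‖²/σ)‖μ - λ‖ for all λ, μ. -/

import Mathlib

open RealInnerProductSpace

theorem dual_function_gradient_lipschitz {n m : ℕ}
    (f : EuclideanSpace ℝ (Fin n) → ℝ) (σ : ℝ) (hσ : 0 < σ)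
    (hdiff : Differentiable ℝ f)
    (hsc : ∀ x y : EuclideanSpace ℝ (Fin n),
      ⟪gradient f y - gradient f x, y - x⟫ ≥ σ * ‖y - x‖ ^ 2)
    (U : Set (EuclideanSpace ℝ (Fin n)))
    (hUcpt : IsCompact U) (hUconv : Convex ℝ U) (hUne : U.Nonempty)
    (G : EuclideanSpace ℝ (Fin n) →L[ℝ] EuclideanSpace ℝ (Fin m))
    (g : EuclideanSpace ℝ (Fin m))
    (u : EuclideanSpace ℝ (Fin m) → EuclideanSpace ℝ (Fin n))
    (hu_mem : ∀ lam, u lam ∈ U)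
    (hu_min : ∀ lam, IsMinOn
      (fun v => f v + ⟪(ContinuousLinearMap.adjoint G) lam, v⟫) U (u lam))
    (q : EuclideanSpace ℝ (Fin m) → ℝ)
    (hq : ∀ lam, q lam =
      f (u lam) + ⟪(ContinuousLinearMap.adjoint G) lam, u lam⟫ - ⟪lam, g⟫) :
    (∀ lam, HasGradientAt q (G (u lam) - g) lam) ∧
    (∀ lam mu, ‖(G (u mu) - g) - (G (u lam) - g)‖ ≤ (‖G‖ ^ 2 / σ) * ‖mu - lam‖) := by
  set A := ContinuousLinearMap.adjoint G with hA
  -- variational inequality at the minimizer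
  have hVI : ∀ lam, ∀ v ∈ U, 0 ≤ ⟪gradient f (u lam) + A lam, v - u lam⟫ := by
    intro lam v hv
    have h1 : HasFDerivAt f
        ((InnerProductSpace.toDual ℝ _) (gradient f (u lam))) (u lam) :=
      (hdiff (u lam)).hasGradientAt.hasFDerivAt
    have h2 : HasFDerivAt (fun w : EuclideanSpace ℝ (Fin n) => ⟪A lam, w⟫)
        (innerSL ℝ (A lam)) (u lam) := (innerSL ℝ (A lam)).hasFDerivAt
    have hF : HasFDerivAt (fun w => f w + ⟪A lam, w⟫)
        ((InnerProductSpace.toDual ℝ _) (gradient f (u lam) + A lam)) (u lam) := by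
      have := h1.add h2
      refine this.congr_fderiv ?_
      ext w
      simp only [ContinuousLinearMap.add_apply, InnerProductSpace.toDual_apply_apply,
        innerSL_apply_apply, inner_add_left]
    have hmin : IsLocalMinOn (fun w => f w + ⟪A lam, w⟫) U (u lam) :=
      (hu_min lam).filter_mono (Filter.le_principal_iff.2 self_mem_nhdsWithin)
    have hy : v - u lam ∈ posTangentConeAt U (u lam) :=
      sub_mem_posTangentConeAt_of_segment_subset
        (hUconv.segment_subset (hu_mem lam) hv)
    have := hmin.hasFDerivWithinAt_nonneg hF.hasFDerivWithinAt hy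
    simpa only [InnerProductSpace.toDual_apply_apply] using this
  -- Lipschitz continuity of the minimizer map
  have hu_lip : ∀ lam mu, ‖u mu - u lam‖ ≤ (‖G‖ / σ) * ‖mu - lam‖ := by
    intro lam mu
    have h1 := hVI lam (u mu) (hu_mem mu)
    have h2 := hVI mu (u lam) (hu_mem lam)
    have hstrong := hsc (u lam) (u mu)
    -- rewrite the inner products
    have e1 : ⟪gradient f (u lam) + A lam, u mu - u lam⟫
        = ⟪gradient f (u lam), u mu - u lam⟫ + ⟪A lam, u mu - u lam⟫ := by
      rw [inner_add_left]
    have e2 : ⟪gradient f (u mu) + A mu, u lam - u mu⟫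
        = -⟪gradient f (u mu), u mu - u lam⟫ - ⟪A mu, u mu - u lam⟫ := by
      have : u lam - u mu = -(u mu - u lam) := by abel
      rw [this, inner_add_left, inner_neg_right, inner_neg_right]
      ring
    have e3 : ⟪gradient f (u mu) - gradient f (u lam), u mu - u lam⟫
        = ⟪gradient f (u mu), u mu - u lam⟫ - ⟪gradient f (u lam), u mu - u lam⟫ := by
      rw [inner_sub_left]
    have e4 : ⟪A lam, u mu - u lam⟫ - ⟪A mu, u mu - u lam⟫
        = ⟪A (lam - mu), u mu - u lam⟫ := by
      rw [map_sub, inner_sub_left]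
    have hbound : ⟪A (lam - mu), u mu - u lam⟫ ≤ ‖G‖ * ‖mu - lam‖ * ‖u mu - u lam‖ := by
      calc ⟪A (lam - mu), u mu - u lam⟫ ≤ ‖A (lam - mu)‖ * ‖u mu - u lam‖ :=
            real_inner_le_norm _ _
        _ ≤ (‖A‖ * ‖lam - mu‖) * ‖u mu - u lam‖ := by
            gcongr; exact (A).le_opNorm _
        _ = ‖G‖ * ‖mu - lam‖ * ‖u mu - u lam‖ := by
            rw [hA, LinearIsometryEquiv.norm_map, norm_sub_rev]
    have key : σ * ‖u mu - u lam‖ ^ 2 ≤ ‖G‖ * ‖mu - lam‖ * ‖u mu - u lam‖ := by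
      rw [e1] at h1; rw [e2] at h2; rw [e3] at hstrong
      rw [← e4] at hbound
      linarith
    rcases eq_or_lt_of_le (norm_nonneg (u mu - u lam)) with h0 | h0
    · rw [← h0]
      positivity
    · rw [div_mul_eq_mul_div, le_div_iff₀ hσ]
      have hk := key
      rw [pow_two, ← mul_assoc] at hk
      have h5 := le_of_mul_le_mul_right hk h0
      linarith
  -- Lipschitz bound for the candidate gradient
  have hGlip : ∀ lam mu, ‖(G (u mu) - g) - (G (u lam) - g)‖ ≤ (‖G‖ ^ 2 / σ) * ‖mu - lam‖ := by
    intro lam mu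
    have : (G (u mu) - g) - (G (u lam) - g) = G (u mu - u lam) := by
      rw [map_sub]; abel
    rw [this]
    calc ‖G (u mu - u lam)‖ ≤ ‖G‖ * ‖u mu - u lam‖ := G.le_opNorm _
      _ ≤ ‖G‖ * ((‖G‖ / σ) * ‖mu - lam‖) := by
          gcongr
          exact hu_lip lam mu
      _ = (‖G‖ ^ 2 / σ) * ‖mu - lam‖ := by ring
  -- two-sided bound on q increments
  have hub : ∀ lam mu, q mu - q lam ≤ ⟪G (u lam) - g, mu - lam⟫ := by
    intro lam mu
    have hmin := isMinOn_iff.1 (hu_min mu) (u lam) (hu_mem lam)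
    have hql := hq lam; have hqm := hq mu
    have hadj1 : ⟪A mu, u lam⟫ = ⟪mu, G (u lam)⟫ :=
      ContinuousLinearMap.adjoint_inner_left G (u lam) mu
    have hadj2 : ⟪A lam, u lam⟫ = ⟪lam, G (u lam)⟫ :=
      ContinuousLinearMap.adjoint_inner_left G (u lam) lam
    have expand : ⟪G (u lam) - g, mu - lam⟫
        = ⟪mu, G (u lam)⟫ - ⟪lam, G (u lam)⟫ - ⟪mu, g⟫ + ⟪lam, g⟫ := by
      rw [inner_sub_left, inner_sub_right, inner_sub_right,
        real_inner_comm (G (u lam)) mu, real_inner_comm (G (u lam)) lam,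
        real_inner_comm g mu, real_inner_comm g lam]
      ring
    linarith
  have hlb : ∀ lam mu, ⟪G (u mu) - g, mu - lam⟫ ≤ q mu - q lam := by
    intro lam mu
    have hmin := isMinOn_iff.1 (hu_min lam) (u mu) (hu_mem mu)
    have hql := hq lam; have hqm := hq mu
    have hadj1 : ⟪A mu, u mu⟫ = ⟪mu, G (u mu)⟫ :=
      ContinuousLinearMap.adjoint_inner_left G (u mu) mu
    have hadj2 : ⟪A lam, u mu⟫ = ⟪lam, G (u mu)⟫ :=
      ContinuousLinearMap.adjoint_inner_left G (u mu) lam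
    have expand : ⟪G (u mu) - g, mu - lam⟫
        = ⟪mu, G (u mu)⟫ - ⟪lam, G (u mu)⟫ - ⟪mu, g⟫ + ⟪lam, g⟫ := by
      rw [inner_sub_left, inner_sub_right, inner_sub_right,
        real_inner_comm (G (u mu)) mu, real_inner_comm (G (u mu)) lam,
        real_inner_comm g mu, real_inner_comm g lam]
      ring
    linarith
  constructor
  · intro lam
    rw [hasGradientAt_iff_hasFDerivAt]
    rw [hasFDerivAt_iff_isLittleO]
    set C := ‖G‖ ^ 2 / σ with hC
    have hC0 : 0 ≤ C := by positivity
    have hbound : ∀ mu, |q mu - q lam - ⟪G (u lam) - g, mu - lam⟫| ≤ C * ‖mu - lam‖ ^ 2 := by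
      intro mu
      have h1 := hub lam mu
      have h2 := hlb lam mu
      have h3 : ⟪(G (u mu) - g) - (G (u lam) - g), mu - lam⟫
          ≥ -(C * ‖mu - lam‖ ^ 2) := by
        have := real_inner_le_norm ((G (u lam) - g) - (G (u mu) - g)) (mu - lam)
        have hn : ‖(G (u lam) - g) - (G (u mu) - g)‖ ≤ C * ‖mu - lam‖ := by
          rw [norm_sub_rev]; exact hGlip lam mu
        have hinn : ⟪(G (u lam) - g) - (G (u mu) - g), mu - lam⟫
            = -⟪(G (u mu) - g) - (G (u lam) - g), mu - lam⟫ := by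
          rw [← inner_neg_left]; congr 1; abel
        have hnl : ⟪(G (u lam) - g) - (G (u mu) - g), mu - lam⟫
            ≤ (C * ‖mu - lam‖) * ‖mu - lam‖ := by
          refine this.trans ?_
          gcongr
        rw [hinn] at hnl
        rw [pow_two]
        linarith
      have h4 : ⟪(G (u mu) - g) - (G (u lam) - g), mu - lam⟫
          = ⟪G (u mu) - g, mu - lam⟫ - ⟪G (u lam) - g, mu - lam⟫ := inner_sub_left _ _ _
      have hpos : 0 ≤ C * ‖mu - lam‖ ^ 2 := by positivity
      rw [abs_le]
      constructor <;> linarith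
    rw [Asymptotics.isLittleO_iff]
    intro c hc
    have hball : Metric.closedBall lam (c / (C + 1)) ∈ nhds lam :=
      Metric.closedBall_mem_nhds lam (by positivity)
    filter_upwards [hball] with mu hmu
    rw [Metric.mem_closedBall, dist_eq_norm] at hmu
    have hb := hbound mu
    have hn0 : (0:ℝ) ≤ ‖mu - lam‖ := norm_nonneg _
    have : |q mu - q lam - ⟪G (u lam) - g, mu - lam⟫| ≤ c * ‖mu - lam‖ := by
      refine hb.trans ?_
      rw [pow_two, ← mul_assoc]
      have hCc : C * ‖mu - lam‖ ≤ c := by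
        calc C * ‖mu - lam‖ ≤ C * (c / (C + 1)) := by gcongr
          _ ≤ c := by
              rw [div_eq_mul_inv]
              have h1 : C / (C + 1) ≤ 1 := by
                rw [div_le_one (by linarith)]; linarith
              calc C * (c * (C + 1)⁻¹) = c * (C / (C + 1)) := by
                    field_simp
                _ ≤ c * 1 := by
                    have := hc.le
                    gcongr
                _ = c := mul_one c
      exact mul_le_mul_of_nonneg_right hCc hn0
    rw [Real.norm_eq_abs]
    exact this
  · exact hGlip
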